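/- Accuracy of the small-domain frequency-estimation protocol: let n, B be positive integers, 0 < ε ≤ 3, 0 < δ < 1, β ∈ (0,1], and set ρ = (32·ln(2/δ)/ε²)·(B/n); assume ρ ≤ 1. Let Z₁,…,Z_n be i.i.d. random variables where each Z_i equals a uniformly random element of [B] with probability ρ and equals a special symbol ⊥ otherwise. For a dataset D = (x₁,…,x_n) ∈ [B]^n, let g(j) = #{i : x_i = j} be the true frequency of j and define the estimate ĝ(j) = g(j) + #{i : Z_i = j} − n·ρ/B for each j ∈ [B]. Then Pr[ max_{j∈[B]} |ĝ(j) − g(j)| > α ] < β, where α = max{ 3·ln(2B/β), √( 3·ln(2B/β) · 32·ln(2/δ)/ε² ) }. -/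

import Mathlib

open MeasureTheory ProbabilityTheory

lemma aux_exp_lt {s : ℝ} (hs : 0 < s) : Real.exp s * (2 - s) < 2 + s := by
  have key : StrictMonoOn (fun x : ℝ => (2 + x) * Real.exp (-x) - (2 - x)) (Set.Ici 0) := by
    apply strictMonoOn_of_deriv_pos (convex_Ici 0)
    · exact Continuous.continuousOn (by continuity)
    · intro x hx
      rw [interior_Ici] at hx
      have h2 : HasDerivAt (fun x : ℝ => Real.exp (-x)) (-Real.exp (-x)) x := by
        simpa [Function.comp_def] using (Real.hasDerivAt_exp (-x)).comp x ((hasDerivAt_id x).neg)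
      have h1 : HasDerivAt (fun x : ℝ => 2 + x) 1 x := by
        simpa using (hasDerivAt_id x).const_add (2:ℝ)
      have h4 : HasDerivAt (fun x : ℝ => 2 - x) (-1) x := by
        simpa using (hasDerivAt_id x).const_sub (2:ℝ)
      have hd : HasDerivAt (fun x : ℝ => (2 + x) * Real.exp (-x) - (2 - x))
          (1 - (1 + x) * Real.exp (-x)) x := by
        have := (h1.mul h2).sub h4
        exact this.congr_deriv (by ring)
      rw [hd.deriv]
      have hlt : x + 1 < Real.exp x := Real.add_one_lt_exp (ne_of_gt hx)
      have hmul : Real.exp (-x) * Real.exp x = 1 := by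
        rw [← Real.exp_add]; simp
      nlinarith [Real.exp_pos x, Real.exp_pos (-x)]
  have h0 := key Set.self_mem_Ici (Set.mem_Ici.mpr hs.le) hs
  simp only [neg_zero, Real.exp_zero, mul_one, add_zero, sub_zero] at h0
  have hmul : Real.exp (-s) * Real.exp s = 1 := by rw [← Real.exp_add]; simp
  nlinarith [Real.exp_pos s, Real.exp_pos (-s), mul_pos (sub_pos.mpr h0) (Real.exp_pos s)]

lemma aux_exp_neg_le {s : ℝ} (hs : 0 ≤ s) : Real.exp (-s) ≤ 1 - s + s ^ 2 / 2 := by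
  have key : MonotoneOn (fun x : ℝ => 1 - x + x ^ 2 / 2 - Real.exp (-x)) (Set.Ici 0) := by
    have hd : ∀ x : ℝ, HasDerivAt (fun x : ℝ => 1 - x + x ^ 2 / 2 - Real.exp (-x))
        (-1 + x + Real.exp (-x)) x := by
      intro x
      have h2 : HasDerivAt (fun x : ℝ => Real.exp (-x)) (-Real.exp (-x)) x := by
        simpa [Function.comp_def] using (Real.hasDerivAt_exp (-x)).comp x ((hasDerivAt_id x).neg)
      have h1 : HasDerivAt (fun x : ℝ => 1 - x + x ^ 2 / 2) (-1 + x) x := by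
        have ha : HasDerivAt (fun x : ℝ => 1 - x) (-1) x := by
          simpa using (hasDerivAt_id x).const_sub (1:ℝ)
        have hb : HasDerivAt (fun x : ℝ => x ^ 2 / 2) x x := by
          simpa using (hasDerivAt_pow 2 x).div_const 2
        exact ha.add hb
      have := h1.sub h2
      exact this.congr_deriv (by ring)
    apply monotoneOn_of_deriv_nonneg (convex_Ici 0) (Continuous.continuousOn (by continuity))
    · intro x _
      exact (hd x).differentiableAt.differentiableWithinAt
    · intro x hx
      rw [interior_Ici] at hx
      rw [(hd x).deriv]
      have := Real.add_one_le_exp (-x)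
      linarith
  have h0 := key Set.self_mem_Ici (Set.mem_Ici.mpr hs) hs
  simp only [neg_zero, Real.exp_zero] at h0
  norm_num at h0
  linarith

lemma tail_lemma {Ω : Type*} [MeasurableSpace Ω] (μ : Measure Ω) [IsProbabilityMeasure μ]
    {n : ℕ} (W : Fin n → Set Ω) (hW : ∀ i, MeasurableSet (W i))
    (hind : iIndepFun
      (fun i => (W i).indicator (fun _ => (1 : ℝ))) μ)
    (p : ℝ) (hp0 : 0 ≤ p) (hp1 : p ≤ 1) (hμW : ∀ i, μ (W i) = ENNReal.ofReal p)
    (σ : ℝ) (hσ : σ = 1 ∨ σ = -1)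
    (m α : ℝ) (hm : m = n * p) (hm0 : 0 < m) (hα0 : 0 < α) :
    (μ {ω | σ * m + α ≤ σ * ∑ i, (W i).indicator (fun _ => (1 : ℝ)) ω}).toReal
      < Real.exp (-(α ^ 2 / (2 * m + α))) := by
  set s : ℝ := 2 * α / (2 * m + α) with hs_def
  have h2ma : 0 < 2 * m + α := by linarith
  have hs0 : 0 < s := by positivity
  have hs2 : s < 2 := by
    rw [hs_def, div_lt_iff₀ h2ma]; linarith
  set q : ℝ := s * σ with hq_def
  set Y : Fin n → Ω → ℝ := fun i ω => σ * (W i).indicator (fun _ => (1 : ℝ)) ω with hY_def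
  have hYmeas : ∀ i, Measurable (Y i) :=
    fun i => (measurable_const.indicator (hW i)).const_mul σ
  have hYind : iIndepFun Y μ :=
    hind.comp (fun _ x => σ * x) (fun _ => measurable_const_mul σ)
  have hfun : ∀ i, (fun ω => Real.exp (s * Y i ω))
      = fun ω => (W i).indicator (fun _ => Real.exp q - 1) ω + 1 := by
    intro i
    funext ω
    by_cases hw : ω ∈ W i
    · simp [hY_def, Set.indicator_of_mem hw, hq_def]
    · simp [hY_def, Set.indicator_of_notMem hw]
  have hint : ∀ i, Integrable (fun ω => Real.exp (s * Y i ω)) μ := by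
    intro i
    rw [hfun i]
    exact ((integrable_const _).indicator (hW i)).add (integrable_const 1)
  have hmgf : ∀ i, mgf (Y i) μ s = 1 + p * (Real.exp q - 1) := by
    intro i
    rw [mgf, hfun i, integral_add ((integrable_const _).indicator (hW i)) (integrable_const 1),
      integral_indicator_const _ (hW i), integral_const, measureReal_def, measureReal_def, hμW i,
      ENNReal.toReal_ofReal hp0, measure_univ]
    simp only [smul_eq_mul, ENNReal.toReal_one, one_smul]
    ring
  have hSint : Integrable (fun ω => Real.exp (s * (∑ i, Y i) ω)) μ :=
    hYind.integrable_exp_mul_sum hYmeas (fun i _ => hint i)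
  have hch := measure_ge_le_exp_mul_mgf (X := ∑ i, Y i) (μ := μ) (σ * m + α) hs0.le hSint
  have hset : {ω | σ * m + α ≤ σ * ∑ i, (W i).indicator (fun _ => (1 : ℝ)) ω}
      = {ω | σ * m + α ≤ (∑ i, Y i) ω} := by
    ext ω
    simp [hY_def, Finset.sum_apply, Finset.mul_sum]
  rw [hset]
  have hprod : mgf (∑ i, Y i) μ s = (1 + p * (Real.exp q - 1)) ^ n := by
    rw [hYind.mgf_sum hYmeas]
    simp [hmgf]
  have hbase : 0 ≤ 1 + p * (Real.exp q - 1) := by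
    nlinarith [Real.exp_pos q, mul_nonneg hp0 (Real.exp_pos q).le]
  have hpow : (1 + p * (Real.exp q - 1)) ^ n ≤ Real.exp (m * (Real.exp q - 1)) := by
    have h1 : 1 + p * (Real.exp q - 1) ≤ Real.exp (p * (Real.exp q - 1)) := by
      have := Real.add_one_le_exp (p * (Real.exp q - 1)); linarith
    calc (1 + p * (Real.exp q - 1)) ^ n ≤ Real.exp (p * (Real.exp q - 1)) ^ n :=
          pow_le_pow_left₀ hbase h1 n
      _ = Real.exp (n * (p * (Real.exp q - 1))) := by rw [← Real.exp_nat_mul]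
      _ = Real.exp (m * (Real.exp q - 1)) := by rw [hm]; ring_nf
  have hkey : m * (Real.exp q - 1) - s * (σ * m + α) < -(α ^ 2 / (2 * m + α)) := by
    have hq_eq : s * σ * m = q * m := by rw [hq_def]
    have hbound : Real.exp q - 1 - q < s ^ 2 / (2 - s) := by
      have h2s : 0 < 2 - s := by linarith
      rcases hσ with h | h
      · have hq : q = s := by rw [hq_def, h, mul_one]
        rw [hq, lt_div_iff₀ h2s]
        nlinarith [aux_exp_lt hs0]
      · have hq : q = -s := by rw [hq_def, h]; ring
        have h1 : Real.exp q - 1 - q ≤ s ^ 2 / 2 := by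
          rw [hq]
          have := aux_exp_neg_le hs0.le
          linarith
        have h2 : s ^ 2 / 2 < s ^ 2 / (2 - s) := by
          apply div_lt_div_of_pos_left (by positivity) h2s (by linarith)
        linarith
    have hmul : m * (Real.exp q - 1 - q) < m * (s ^ 2 / (2 - s)) :=
      mul_lt_mul_of_pos_left hbound hm0
    have halg : m * (s ^ 2 / (2 - s)) - s * α = -(α ^ 2 / (2 * m + α)) := by
      have h2s : 2 - s = 4 * m / (2 * m + α) := by
        rw [hs_def]; field_simp; ring
      rw [h2s, hs_def]
      have hm4 : (4 : ℝ) * m ≠ 0 := by positivity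
      field_simp
      ring
    have hexpand : s * (σ * m + α) = q * m + s * α := by
      rw [hq_def]; ring
    calc m * (Real.exp q - 1) - s * (σ * m + α)
        = m * (Real.exp q - 1 - q) - s * α := by rw [hexpand]; ring
      _ < m * (s ^ 2 / (2 - s)) - s * α := by linarith
      _ = -(α ^ 2 / (2 * m + α)) := halg
  calc (μ {ω | σ * m + α ≤ (∑ i, Y i) ω}).toReal
      ≤ Real.exp (-s * (σ * m + α)) * mgf (∑ i, Y i) μ s := hch
    _ ≤ Real.exp (-s * (σ * m + α)) * Real.exp (m * (Real.exp q - 1)) := by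
        apply mul_le_mul_of_nonneg_left _ (Real.exp_pos _).le
        rw [hprod]; exact hpow
    _ = Real.exp (m * (Real.exp q - 1) - s * (σ * m + α)) := by
        rw [← Real.exp_add]; ring_nf
    _ < Real.exp (-(α ^ 2 / (2 * m + α))) := Real.exp_lt_exp.mpr hkey

/-- Accuracy of the small-domain frequency-estimation protocol.  The domain `[B]`
is `{1, …, B} ⊆ ℕ`; the noise variable `Z i` equals `0` (representing the special
symbol `⊥`) with probability `1 - ρ` and each element of `[B]` with probability
`ρ / B`. -/
theorem stmt10 (n B : ℕ) (hn : 0 < n) (hB : 0 < B)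
    (ε δ β : ℝ) (hε0 : 0 < ε) (hε3 : ε ≤ 3) (hδ0 : 0 < δ) (hδ1 : δ < 1)
    (hβ0 : 0 < β) (hβ1 : β ≤ 1)
    (ρ : ℝ) (hρ : ρ = 32 * Real.log (2 / δ) / ε ^ 2 * ((B : ℝ) / n)) (hρ1 : ρ ≤ 1)
    {Ω : Type*} [MeasurableSpace Ω] (μ : Measure Ω) [IsProbabilityMeasure μ]
    (Z : Fin n → Ω → ℕ) (hmeas : ∀ i, Measurable (Z i))
    (hindep : iIndepFun Z μ)
    (hlaw0 : ∀ i, μ {ω | Z i ω = 0} = ENNReal.ofReal (1 - ρ))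
    (hlawj : ∀ i, ∀ j ∈ Finset.Icc 1 B, μ {ω | Z i ω = j} = ENNReal.ofReal (ρ / B))
    (D : Fin n → ℕ) (hD : ∀ i, D i ∈ Finset.Icc 1 B) :
    (μ {ω | ∃ j ∈ Finset.Icc 1 B,
        |((((Finset.univ.filter fun i => D i = j).card : ℝ) +
            ((Finset.univ.filter fun i => Z i ω = j).card : ℝ) - n * ρ / B) -
          ((Finset.univ.filter fun i => D i = j).card : ℝ))| >
        max (3 * Real.log (2 * B / β))
          (Real.sqrt (3 * Real.log (2 * B / β) * (32 * Real.log (2 / δ) / ε ^ 2)))}).toReal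
      < β := by
  have hn0 : (0:ℝ) < n := by exact_mod_cast hn
  have hB0 : (0:ℝ) < B := by exact_mod_cast hB
  have hB1 : (1:ℝ) ≤ B := by exact_mod_cast hB
  set c : ℝ := 32 * Real.log (2 / δ) / ε ^ 2 with hc_def
  set t0 : ℝ := Real.log (2 * B / β) with ht0_def
  set α : ℝ := max (3 * t0) (Real.sqrt (3 * t0 * c)) with hα_def
  set p : ℝ := ρ / B with hp_def
  set m : ℝ := (n:ℝ) * ρ / B with hm_def
  have hlog : 0 < Real.log (2 / δ) := Real.log_pos (by rw [lt_div_iff₀ hδ0]; linarith)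
  have hc0 : 0 < c := div_pos (by linarith) (pow_pos hε0 2)
  have hmc : m = c := by
    show (n:ℝ) * ρ / B = c
    rw [hρ]; field_simp
  have hm0 : 0 < m := hmc ▸ hc0
  have ht0pos : 0 < t0 := Real.log_pos (by rw [lt_div_iff₀ hβ0]; linarith)
  have hα3 : 3 * t0 ≤ α := le_max_left _ _
  have hα0 : 0 < α := lt_of_lt_of_le (by linarith) hα3
  have hαsq1 : 3 * t0 * m ≤ α ^ 2 := by
    have h := le_max_right (3 * t0) (Real.sqrt (3 * t0 * c))
    have hnn : 0 ≤ 3 * t0 * c := by positivity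
    calc 3 * t0 * m = Real.sqrt (3 * t0 * c) ^ 2 := by rw [Real.sq_sqrt hnn, hmc]
      _ ≤ α ^ 2 := pow_le_pow_left₀ (Real.sqrt_nonneg _) h 2
  have hαsq2 : 3 * t0 * α ≤ α ^ 2 := by nlinarith
  have h2ma : 0 < 2 * m + α := by linarith
  have hT : t0 ≤ α ^ 2 / (2 * m + α) := by
    rw [le_div_iff₀ h2ma]; nlinarith
  have hexpgt : Real.exp (-(α ^ 2 / (2 * m + α))) ≤ β / (2 * B) := by
    have h2Bβ : 0 < 2 * (B:ℝ) / β := by positivity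
    calc Real.exp (-(α ^ 2 / (2 * m + α))) ≤ Real.exp (-t0) :=
          Real.exp_le_exp.mpr (by linarith)
      _ = β / (2 * B) := by rw [ht0_def, Real.exp_neg, Real.exp_log h2Bβ, inv_div]
  have hρ0 : 0 < ρ := by rw [hρ]; exact mul_pos hc0 (div_pos hB0 hn0)
  have hp0 : 0 ≤ p := (div_pos hρ0 hB0).le
  have hp1 : p ≤ 1 := by rw [hp_def, div_le_one hB0]; linarith
  have hmnp : m = n * p := by rw [hm_def, hp_def]; ring
  have hcard : ∀ (j : ℕ) (ω : Ω), ((Finset.univ.filter fun i => Z i ω = j).card : ℝ)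
      = ∑ i, ({ω' | Z i ω' = j}).indicator (fun _ => (1:ℝ)) ω := by
    intro j ω
    rw [Finset.card_filter]
    push_cast
    refine Finset.sum_congr rfl fun i _ => ?_
    by_cases h : Z i ω = j
    · simp [h, Set.indicator_of_mem, Set.mem_setOf_eq]
    · simp [h, Set.indicator_of_notMem, Set.mem_setOf_eq]
  -- the two one-sided events, for σ = ±1
  set U : ℝ → ℕ → Set Ω := fun σ j =>
    {ω | σ * m + α ≤ σ * ∑ i, ({ω' | Z i ω' = j}).indicator (fun _ => (1:ℝ)) ω} with hU_def
  have htail : ∀ j ∈ Finset.Icc 1 B, ∀ σ : ℝ, σ = 1 ∨ σ = -1 →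
      (μ (U σ j)).toReal < β / (2 * B) := by
    intro j hj σ hσ
    have hWmeas : ∀ i : Fin n, MeasurableSet {ω' | Z i ω' = j} :=
      fun i => hmeas i (measurableSet_singleton j)
    have hindW : iIndepFun
        (fun i => ({ω' | Z i ω' = j}).indicator (fun _ => (1:ℝ))) μ := by
      have h := hindep.comp (fun _ k => if k = j then (1:ℝ) else 0)
        (fun _ => measurable_from_top)
      have hfeq : (fun (i : Fin n) => ({ω' | Z i ω' = j}).indicator (fun _ => (1:ℝ)))
          = fun i => (fun k => if k = j then (1:ℝ) else 0) ∘ Z i := by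
        funext i ω
        by_cases h : Z i ω = j
        · simp [h, Set.indicator_of_mem, Set.mem_setOf_eq]
        · simp [h, Set.indicator_of_notMem, Set.mem_setOf_eq]
      rw [hfeq]; exact h
    exact lt_of_lt_of_le
      (tail_lemma μ _ hWmeas hindW p hp0 hp1 (fun i => hlawj i j hj) σ hσ m α hmnp hm0 hα0)
      hexpgt
  have hsub : {ω | ∃ j ∈ Finset.Icc 1 B,
        |((((Finset.univ.filter fun i => D i = j).card : ℝ) +
            ((Finset.univ.filter fun i => Z i ω = j).card : ℝ) - m) -
          ((Finset.univ.filter fun i => D i = j).card : ℝ))| > α}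
      ⊆ ⋃ j ∈ Finset.Icc 1 B, (U 1 j ∪ U (-1) j) := by
    intro ω hω
    obtain ⟨j, hj, habs⟩ := hω
    have heq : ((((Finset.univ.filter fun i => D i = j).card : ℝ) +
            ((Finset.univ.filter fun i => Z i ω = j).card : ℝ) - m) -
          ((Finset.univ.filter fun i => D i = j).card : ℝ))
        = (∑ i, ({ω' | Z i ω' = j}).indicator (fun _ => (1:ℝ)) ω) - m := by
      rw [← hcard]; ring
    rw [heq] at habs
    refine Set.mem_iUnion₂.mpr ⟨j, hj, ?_⟩
    rcases lt_abs.mp habs with h | h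
    · left
      show (1:ℝ) * m + α ≤ 1 * ∑ i, ({ω' | Z i ω' = j}).indicator (fun _ => (1:ℝ)) ω
      simp only [one_mul]; linarith
    · right
      show (-1:ℝ) * m + α ≤ (-1) * ∑ i, ({ω' | Z i ω' = j}).indicator (fun _ => (1:ℝ)) ω
      linarith
  have h1 : μ {ω | ∃ j ∈ Finset.Icc 1 B,
        |((((Finset.univ.filter fun i => D i = j).card : ℝ) +
            ((Finset.univ.filter fun i => Z i ω = j).card : ℝ) - m) -
          ((Finset.univ.filter fun i => D i = j).card : ℝ))| > α}
      ≤ ∑ j ∈ Finset.Icc 1 B, (μ (U 1 j) + μ (U (-1) j)) :=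
    (measure_mono hsub).trans ((measure_biUnion_finset_le _ _).trans
      (Finset.sum_le_sum fun j _ => measure_union_le _ _))
  have hfin : (∑ j ∈ Finset.Icc 1 B, (μ (U 1 j) + μ (U (-1) j))) ≠ ⊤ := by
    refine (ENNReal.sum_lt_top.mpr fun j _ => ?_).ne
    exact ENNReal.add_lt_top.mpr ⟨measure_lt_top μ _, measure_lt_top μ _⟩
  calc (μ {ω | ∃ j ∈ Finset.Icc 1 B,
        |((((Finset.univ.filter fun i => D i = j).card : ℝ) +
            ((Finset.univ.filter fun i => Z i ω = j).card : ℝ) - m) -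
          ((Finset.univ.filter fun i => D i = j).card : ℝ))| > α}).toReal
      ≤ (∑ j ∈ Finset.Icc 1 B, (μ (U 1 j) + μ (U (-1) j))).toReal :=
        ENNReal.toReal_mono hfin h1
    _ = ∑ j ∈ Finset.Icc 1 B, ((μ (U 1 j)).toReal + (μ (U (-1) j)).toReal) := by
        rw [ENNReal.toReal_sum (fun j _ =>
          (ENNReal.add_lt_top.mpr ⟨measure_lt_top μ _, measure_lt_top μ _⟩).ne)]
        exact Finset.sum_congr rfl fun j _ =>
          ENNReal.toReal_add (measure_ne_top μ _) (measure_ne_top μ _)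
    _ < ∑ _j ∈ Finset.Icc 1 B, (β / B) := by
        apply Finset.sum_lt_sum_of_nonempty (Finset.nonempty_Icc.mpr hB)
        intro j hj
        have ha := htail j hj 1 (Or.inl rfl)
        have hb := htail j hj (-1) (Or.inr rfl)
        have : β / (2 * B) + β / (2 * B) = β / B := by
          field_simp; ring
        linarith
    _ = β := by
        rw [Finset.sum_const, Nat.card_Icc]
        simp only [Nat.add_sub_cancel, nsmul_eq_mul]
        field_simp
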